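/- Let G be a directed geometric graph on n points in the plane in general position (no two points determine a horizontal or vertical direction), where every edge has positive slope, and each edge is doubled into a left-pointing and right-pointing copy. Define the continuation of a right edge e with right endpoint r as the left edge with right endpoint r immediately below e, and the continuation of a left edge e with left endpoint l as the right edge with left endpoint l immediately above e. Then every edge has at most one continuation, and iterating continuation never repeats an edge (each equivalence class under the transitive closure is a trail). -/

import Mathlib

/-- The slope of a directed segment. -/
noncomputable def slope2 (e : (ℝ × ℝ) × (ℝ × ℝ)) : ℝ :=
  (e.2.2 - e.1.2) / (e.2.1 - e.1.1)

/-- `f` is the continuation of the directed edge `e` in the edge set `E`: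
if `e` points to the right (resp. left), then `f` starts at the head of `e`, points to
the left (resp. right), and is the edge immediately below (resp. above) `e`, i.e. the
one of smallest slope among the edges at that endpoint of larger slope than `e`. -/
def IsCont (E : Finset ((ℝ × ℝ) × (ℝ × ℝ))) (e f : (ℝ × ℝ) × (ℝ × ℝ)) : Prop :=
  f ∈ E ∧ f.1 = e.2 ∧
    ((e.1.1 < e.2.1 ∧ f.2.1 < f.1.1) ∨ (e.2.1 < e.1.1 ∧ f.1.1 < f.2.1)) ∧
    slope2 e < slope2 f ∧
    ∀ g ∈ E, g.1 = e.2 →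
      ((e.1.1 < e.2.1 ∧ g.2.1 < g.1.1) ∨ (e.2.1 < e.1.1 ∧ g.1.1 < g.2.1)) →
      slope2 e < slope2 g → slope2 f ≤ slope2 g

/-- Let `E` be the directed edges (both orientations of each unit segment) of a
geometric graph on a point set `P` in general position (no two points share an `x`- or
`y`-coordinate), all edges being unit segments of positive slope.  Then every edge has
at most one continuation, and iterating the continuation operation never repeats an
edge: every continuation sequence is injective (each equivalence class is a trail). -/
theorem stmt16 (P : Finset (ℝ × ℝ)) (E : Finset ((ℝ × ℝ) × (ℝ × ℝ)))
    (hgen : ∀ p ∈ P, ∀ q ∈ P, p ≠ q → p.1 ≠ q.1 ∧ p.2 ≠ q.2)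
    (hE : ∀ e ∈ E, e.1 ∈ P ∧ e.2 ∈ P ∧
      0 < (e.2.1 - e.1.1) * (e.2.2 - e.1.2) ∧
      (e.2.1 - e.1.1) ^ 2 + (e.2.2 - e.1.2) ^ 2 = 1)
    (hdouble : ∀ e ∈ E, Prod.swap e ∈ E) :
    (∀ e ∈ E, ∀ f f', IsCont E e f → IsCont E e f' → f = f') ∧
    (∀ m : ℕ, ∀ c : Fin (m + 1) → (ℝ × ℝ) × (ℝ × ℝ),
      (∀ i, c i ∈ E) → (∀ i : Fin m, IsCont E (c i.castSucc) (c i.succ)) →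
      Function.Injective c) := by
  constructor
  · rintro e he f f' hf hf'
    obtain ⟨hfE, hf1, hfd, hfs, hfmin⟩ := hf
    obtain ⟨hf'E, hf'1, hf'd, hf's, hf'min⟩ := hf'
    have hslope : slope2 f = slope2 f' :=
      le_antisymm (hfmin f' hf'E hf'1 hf'd hf's) (hf'min f hfE hf1 hfd hfs)
    obtain ⟨_, _, hpos, hunit⟩ := hE f hfE
    obtain ⟨_, _, hpos', hunit'⟩ := hE f' hf'E
    have hdx : f.2.1 - f.1.1 ≠ 0 := by
      intro h; rw [h] at hpos; simp at hpos
    have hdx' : f'.2.1 - f'.1.1 ≠ 0 := by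
      intro h; rw [h] at hpos'; simp at hpos'
    have hstart : f.1 = f'.1 := by rw [hf1, hf'1]
    have hsign : (0 < f.2.1 - f.1.1 ↔ 0 < f'.2.1 - f'.1.1) := by
      rcases hfd with ⟨he1, h⟩ | ⟨he1, h⟩ <;> rcases hf'd with ⟨he1', h'⟩ | ⟨he1', h'⟩ <;>
        constructor <;> intro <;> linarith
    have hs : (f.2.2 - f.1.2) * (f'.2.1 - f'.1.1) = (f'.2.2 - f'.1.2) * (f.2.1 - f.1.1) := by
      have h := hslope
      unfold slope2 at h
      rw [div_eq_div_iff (by exact sub_ne_zero.mpr (fun hh => hdx (by rw [hh]; ring)) ) ] at h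
      · linarith
      · exact fun hh => hdx' (by linarith [sub_eq_zero.mpr hh])
    have hsq : (f.2.1 - f.1.1) ^ 2 = (f'.2.1 - f'.1.1) ^ 2 := by
      linear_combination (f'.2.1 - f'.1.1) ^ 2 * hunit - (f.2.1 - f.1.1) ^ 2 * hunit' -
        ((f.2.2 - f.1.2) * (f'.2.1 - f'.1.1) + (f'.2.2 - f'.1.2) * (f.2.1 - f.1.1)) * hs
    have hdxeq : f.2.1 - f.1.1 = f'.2.1 - f'.1.1 := by
      rcases lt_or_gt_of_ne hdx with h | h
      · have h' : f'.2.1 - f'.1.1 < 0 := by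
          by_contra hc
          push_neg at hc
          rcases eq_or_lt_of_le hc with hc | hc
          · exact hdx' hc.symm
          · linarith [hsign.mpr hc]
        nlinarith
      · have h' : 0 < f'.2.1 - f'.1.1 := hsign.mp h
        nlinarith
    have hdyeq : f.2.2 - f.1.2 = f'.2.2 - f'.1.2 := by
      have := hs
      rw [← hdxeq] at this
      exact mul_right_cancel₀ hdx this
    have h1 : f.1.1 = f'.1.1 := by rw [hstart]
    have h2 : f.1.2 = f'.1.2 := by rw [hstart]
    have : f.2 = f'.2 := by
      apply Prod.ext <;> linarith
    exact Prod.ext hstart this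
  · intro m c hcE hcont
    have hmono : StrictMono (fun i => slope2 (c i)) := by
      rw [Fin.strictMono_iff_lt_succ]
      intro i
      exact (hcont i).2.2.2.1
    intro i j hij
    exact hmono.injective (congrArg slope2 hij)
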